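/- The coefficient of m̃_μ in r_λ is zero unless μ is a refinement of λ (some puzzle of μ into λ exists), and equals 1 when μ = λ; consequently for each d the set {r_λ : λ ⊢ d} is a basis of the degree-d homogeneous symmetric functions. -/

import Mathlib

open Finset
open scoped Classical

noncomputable section

/-- The multiset of (nonzero) exponents of a monomial. -/
def expParts (d : ℕ →₀ ℕ) : Multiset ℕ := d.support.val.map d

/-- `∏ i, n_i(m)!` where `n_i(m)` is the multiplicity of `i` in the multiset `m`. -/
def multFact (m : Multiset ℕ) : ℕ := ∏ j ∈ m.toFinset, (m.count j).factorial

/-- The augmented monomial symmetric function indexed by a multiset of positive parts. -/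
def mtilde (m : Multiset ℕ) : MvPowerSeries ℕ ℚ :=
  fun d => if expParts d = m then (multFact m : ℚ) else 0

/-- The chromatic symmetric function of a finite simple graph, as a power series in
countably many variables: the coefficient of a monomial `d` is the number of proper
colorings `κ : V → ℕ` in which color `c` is used exactly `d c` times. -/
def csf {V : Type} [Fintype V] (G : SimpleGraph V) : MvPowerSeries ℕ ℚ :=
  fun d => (Nat.card {κ : V → ℕ // (∀ v w, G.Adj v w → κ v ≠ κ w) ∧
      ∀ c, (Finset.univ.filter (fun v => κ v = c)).card = d c} : ℚ)

/-- The complete multipartite graph with stable sets of sizes given by the list `l`. -/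
def multipartite (l : List ℕ) : SimpleGraph (Σ j : Fin l.length, Fin (l.get j)) where
  Adj x y := x.1 ≠ y.1
  symm := ⟨fun _ _ h => Ne.symm h⟩
  loopless := ⟨fun _ h => h rfl⟩

/-- `r_λ`, the chromatic symmetric function of the complete multipartite graph `G_λ`. -/
def rOf (m : Multiset ℕ) : MvPowerSeries ℕ ℚ := csf (multipartite m.toList)

/-- A set partition (of the whole vertex set) is stable if each block is independent. -/
def IsStable {V : Type} [Fintype V] [DecidableEq V] (G : SimpleGraph V)
    (P : Finpartition (Finset.univ : Finset V)) : Prop :=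
  ∀ b ∈ P.parts, ∀ v ∈ b, ∀ w ∈ b, ¬ G.Adj v w

/-- The multiset of block sizes of a finpartition. -/
def typeOf {V : Type} [DecidableEq V] {s : Finset V} (P : Finpartition s) : Multiset ℕ :=
  P.parts.val.map Finset.card

/-- The puzzles of `μ` into the list of parts `l`. -/
def puzzles (mu : Multiset ℕ) (l : List ℕ) : Finset (Fin l.length → Multiset ℕ) :=
  (Fintype.piFinset fun _ => mu.powerset.toFinset).filter
    (fun g => (∑ i, g i) = mu ∧ ∀ i, (g i).sum = l.get i)

/-- A canonical monomial whose exponents are the parts of `m`. -/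
def dmon (m : Multiset ℕ) : ℕ →₀ ℕ := m.toList.toFinsupp

/-- `r_λ` as a family indexed by partitions of `n`. -/
def rBasis (n : ℕ) (lam : Nat.Partition n) : MvPowerSeries ℕ ℚ := rOf lam.parts

/-- The space `Λ^n`: symmetric power series homogeneous of degree `n`. -/
def symHomog (n : ℕ) : Set (MvPowerSeries ℕ ℚ) :=
  {f | (∀ (σ : Equiv.Perm ℕ) (d : ℕ →₀ ℕ),
          MvPowerSeries.coeff (d.mapDomain σ) f = MvPowerSeries.coeff d f) ∧
       (∀ d : ℕ →₀ ℕ, MvPowerSeries.coeff d f ≠ 0 → (d.sum fun _ v => v) = n)}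

lemma coeff_eq (d : ℕ →₀ ℕ) (f : MvPowerSeries ℕ ℚ) : MvPowerSeries.coeff d f = f d := rfl

lemma univ_val_map_get (l : List ℕ) :
    (Finset.univ : Finset (Fin l.length)).val.map l.get = (l : Multiset ℕ) := by
  rw [Fin.univ_def]
  show ((↑(List.finRange l.length) : Multiset (Fin l.length)).map l.get) = _
  rw [Multiset.map_coe, ← List.ofFn_eq_map, List.ofFn_get]

lemma expParts_sum (d : ℕ →₀ ℕ) : (expParts d).sum = d.sum (fun _ v => v) := rfl

lemma multFact_ne_zero (m : Multiset ℕ) : (multFact m : ℚ) ≠ 0 := by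
  have : multFact m ≠ 0 := by
    apply Finset.prod_ne_zero_iff.mpr
    intro j _; exact (Nat.factorial_pos _).ne'
  exact_mod_cast this

lemma mem_expParts {d : ℕ →₀ ℕ} {j : ℕ} : j ∈ expParts d ↔ ∃ a ∈ d.support, d a = j := by
  simp [expParts]

lemma expParts_pos {d : ℕ →₀ ℕ} {j : ℕ} (h : j ∈ expParts d) : 0 < j := by
  rcases mem_expParts.mp h with ⟨a, ha, rfl⟩
  exact Nat.pos_of_ne_zero (Finsupp.mem_support_iff.mp ha)

lemma expParts_dmon {m : Multiset ℕ} (hm : ∀ x ∈ m, 0 < x) : expParts (dmon m) = m := by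
  classical
  set l := m.toList with hl
  have hsup : (dmon m).support = Finset.range l.length := by
    rw [dmon, List.toFinsupp_support]
    apply Finset.filter_true_of_mem
    intro i hi
    rw [Finset.mem_range] at hi
    rw [List.getD_eq_getElem l 0 hi]
    have : l[i] ∈ m := by rw [← Multiset.coe_toList m]; exact List.getElem_mem _
    exact (hm _ this).ne'
  rw [expParts, hsup]
  have : (Finset.range l.length).val.map (dmon m) = (Finset.range l.length).val.map (fun i => l.getD i 0) := by
    apply Multiset.map_congr rfl
    intro i _
    rw [dmon, List.toFinsupp_apply]
  rw [this, Finset.range_val, Multiset.range, Multiset.map_coe, ← Multiset.coe_toList m]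
  congr 1
  apply List.ext_getElem
  · simp [hl]
  · intro i h1 h2
    simp [hl, List.getD_eq_getElem?_getD, List.getElem?_eq_getElem h2]

lemma expParts_erase (d : ℕ →₀ ℕ) {a : ℕ} (ha : a ∈ d.support) :
    expParts (Finsupp.erase a d) = (expParts d).erase (d a) := by
  classical
  rw [expParts, Finsupp.support_erase]
  have h1 : (d.support.erase a).val.map (Finsupp.erase a d) = (d.support.erase a).val.map d := by
    apply Multiset.map_congr rfl
    intro x hx
    have hxa : x ≠ a := by
      have : x ∈ d.support.erase a := hx
      exact (Finset.mem_erase.mp this).1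
    exact Finsupp.erase_ne hxa
  have haa : a ∈ d.support.val := ha
  rw [h1, Finset.erase_val]
  conv_rhs => rw [expParts, ← Multiset.cons_erase haa, Multiset.map_cons,
    Multiset.erase_cons_head]

lemma exists_perm_of_expParts_eq : ∀ (k : ℕ) (d e : ℕ →₀ ℕ), e.support.card = k →
    expParts d = expParts e → ∃ σ : Equiv.Perm ℕ, ∀ x, e x = d (σ x) := by
  intro k
  induction k with
  | zero =>
    intro d e hcard h
    have he : e = 0 := by
      rwa [Finset.card_eq_zero, Finsupp.support_eq_empty] at hcard
    have hd : d = 0 := by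
      have h0 : expParts d = 0 := by rw [h, he]; simp [expParts]
      rw [expParts, Multiset.map_eq_zero] at h0
      have : d.support = ∅ := Finset.val_eq_zero.mp h0
      exact Finsupp.support_eq_empty.mp this
    subst he; subst hd; exact ⟨1, fun x => rfl⟩
  | succ k ih =>
    intro d e hcard h
    have hne : e.support.Nonempty := by rw [← Finset.card_pos, hcard]; omega
    obtain ⟨b, hb⟩ := hne
    have hmem : e b ∈ expParts d := by rw [h]; exact mem_expParts.mpr ⟨b, hb, rfl⟩
    obtain ⟨a, ha, hab⟩ := mem_expParts.mp hmem
    have h' : expParts (Finsupp.erase a d) = expParts (Finsupp.erase b e) := by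
      rw [expParts_erase d ha, expParts_erase e hb, h, hab]
    have hcard' : (Finsupp.erase b e).support.card = k := by
      rw [Finsupp.support_erase, Finset.card_erase_of_mem hb, hcard]; omega
    obtain ⟨σ₁, hσ₁⟩ := ih _ _ hcard' h'
    set c := σ₁.symm a with hc
    refine ⟨(Equiv.swap b c).trans σ₁, ?_⟩
    intro x
    simp only [Equiv.trans_apply]
    by_cases hxb : x = b
    · rw [hxb, Equiv.swap_apply_left]
      show e b = d (σ₁ (σ₁.symm a))
      rw [Equiv.apply_symm_apply]; exact hab.symm
    by_cases hxc : x = c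
    · have hcb : c ≠ b := fun hh => hxb (hxc.trans hh)
      rw [hxc, Equiv.swap_apply_right]
      have h1 : (Finsupp.erase a d) (σ₁ b) = 0 := by rw [← hσ₁ b, Finsupp.erase_same]
      have h2 : σ₁ b ≠ a := by
        intro hh
        exact hcb (by rw [hc, ← hh, Equiv.symm_apply_apply])
      have h3 : d (σ₁ b) = 0 := by rw [← Finsupp.erase_ne h2]; exact h1
      have h4 : e c = 0 := by
        have := hσ₁ c
        rw [Finsupp.erase_ne hcb] at this
        rw [this]
        show (Finsupp.erase a d) (σ₁ (σ₁.symm a)) = 0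
        rw [Equiv.apply_symm_apply, Finsupp.erase_same]
      rw [h4, h3]
    · rw [Equiv.swap_apply_of_ne_of_ne hxb hxc]
      have h1 : σ₁ x ≠ a := fun hh => hxc (by rw [hc, ← hh, Equiv.symm_apply_apply])
      have := hσ₁ x
      rw [Finsupp.erase_ne hxb, Finsupp.erase_ne h1] at this
      exact this

lemma exists_mapDomain (d e : ℕ →₀ ℕ) (h : expParts d = expParts e) :
    ∃ σ : Equiv.Perm ℕ, Finsupp.mapDomain σ e = d := by
  obtain ⟨σ, hσ⟩ := exists_perm_of_expParts_eq e.support.card d e rfl h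
  refine ⟨σ, ?_⟩
  ext x
  rw [Finsupp.mapDomain_equiv_apply, hσ (σ.symm x), Equiv.apply_symm_apply]

lemma csf_symm {V : Type} [Fintype V] (G : SimpleGraph V) (σ : Equiv.Perm ℕ) (d : ℕ →₀ ℕ) :
    MvPowerSeries.coeff (d.mapDomain σ) (csf G) = MvPowerSeries.coeff d (csf G) := by
  rw [coeff_eq, coeff_eq, csf, csf]
  norm_cast
  apply Nat.card_congr
  apply (Equiv.subtypeEquiv (Equiv.arrowCongr (Equiv.refl V) σ) _).symm
  intro κ
  have hco : ∀ v, (Equiv.arrowCongr (Equiv.refl V) σ) κ v = σ (κ v) := fun v => rfl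
  constructor
  · rintro ⟨hp, hc⟩
    constructor
    · intro v w hvw hh
      rw [hco, hco] at hh
      exact hp v w hvw (σ.injective hh)
    · intro c
      rw [Finsupp.mapDomain_equiv_apply, ← hc (σ.symm c)]
      congr 1
      apply Finset.filter_congr
      intro v _
      rw [hco]
      constructor
      · intro hh; rw [← hh, Equiv.symm_apply_apply]
      · intro hh; rw [hh, Equiv.apply_symm_apply]
  · rintro ⟨hp, hc⟩
    constructor
    · intro v w hvw hh
      exact hp v w hvw (by rw [hco, hco, hh])
    · intro c
      have := hc (σ c)
      rw [Finsupp.mapDomain_equiv_apply, Equiv.symm_apply_apply] at this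
      rw [← this]
      congr 1
      apply Finset.filter_congr
      intro v _
      rw [hco]
      constructor
      · intro hh; rw [hh]
      · intro hh; exact σ.injective hh

lemma csf_homog {V : Type} [Fintype V] (G : SimpleGraph V) (d : ℕ →₀ ℕ)
    (h : MvPowerSeries.coeff d (csf G) ≠ 0) : (d.sum fun _ v => v) = Fintype.card V := by
  rw [coeff_eq, csf] at h
  have h' : Nat.card {κ : V → ℕ // (∀ v w, G.Adj v w → κ v ≠ κ w) ∧
      ∀ c, (Finset.univ.filter (fun v => κ v = c)).card = d c} ≠ 0 := by
    intro h0; rw [h0] at h; exact h (by norm_num)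
  have hne := (Nat.card_ne_zero.mp h').1
  obtain ⟨κ, hp, hc⟩ := hne
  have hcover : ∀ v : V, κ v ∈ d.support := by
    intro v
    rw [Finsupp.mem_support_iff, ← hc (κ v)]
    apply Finset.card_ne_zero_of_mem (a := v)
    exact Finset.mem_filter.mpr ⟨Finset.mem_univ v, rfl⟩
  have hcard := Finset.card_eq_sum_card_fiberwise (f := κ) (s := Finset.univ)
    (t := d.support) (fun v _ => hcover v)
  rw [Finset.card_univ] at hcard
  rw [Finsupp.sum, hcard]
  apply Finset.sum_congr rfl
  intro c _
  exact (hc c).symm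

def symHomogSub (n : ℕ) : Submodule ℚ (MvPowerSeries ℕ ℚ) where
  carrier := symHomog n
  add_mem' := by
    rintro f g ⟨hf1, hf2⟩ ⟨hg1, hg2⟩
    constructor
    · intro σ d; rw [map_add, map_add, hf1, hg1]
    · intro d h
      have : MvPowerSeries.coeff d f ≠ 0 ∨ MvPowerSeries.coeff d g ≠ 0 := by
        by_contra h0
        push_neg at h0
        rw [map_add, h0.1, h0.2, add_zero] at h
        exact h rfl
      rcases this with h1 | h1
      · exact hf2 d h1
      · exact hg2 d h1
  zero_mem' := by
    show _ ∧ _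
    constructor
    · intro σ d; simp
    · intro d h; simp at h
  smul_mem' := by
    rintro c f ⟨h1, h2⟩
    constructor
    · intro σ d; rw [map_smul, map_smul, h1]
    · intro d h
      apply h2 d
      intro h0
      rw [map_smul, h0, smul_zero] at h
      exact h rfl

def blockEquiv (l : List ℕ) (i : Fin l.length) :
    {v : (Σ j : Fin l.length, Fin (l.get j)) // v.1 = i} ≃ Fin (l.get i) where
  toFun v := v.2 ▸ v.1.2
  invFun x := ⟨⟨i, x⟩, rfl⟩
  left_inv := by rintro ⟨⟨j, x⟩, rfl⟩; rfl
  right_inv x := rfl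

lemma card_block (l : List ℕ) (i : Fin l.length) :
    (Finset.univ.filter (fun v : (Σ j : Fin l.length, Fin (l.get j)) => v.1 = i)).card
      = l.get i := by
  rw [← Fintype.card_subtype, Fintype.card_congr (blockEquiv l i), Fintype.card_fin]

lemma sum_get (l : List ℕ) : ∑ j : Fin l.length, l.get j = l.sum := by
  have h := univ_val_map_get l
  calc ∑ j : Fin l.length, l.get j = ((Finset.univ.val.map l.get)).sum := rfl
    _ = (l : Multiset ℕ).sum := by rw [h]
    _ = l.sum := by rw [Multiset.sum_coe]

lemma card_V (l : List ℕ) :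
    Fintype.card (Σ j : Fin l.length, Fin (l.get j)) = l.sum := by
  rw [Fintype.card_sigma]
  simp only [Fintype.card_fin]
  exact sum_get l

lemma rOf_mem_symHomog (m : Multiset ℕ) : rOf m ∈ symHomog m.sum := by
  show _ ∧ _
  constructor
  · intro σ d; exact csf_symm _ σ d
  · intro d h
    have h2 := csf_homog _ d h
    rw [card_V, Multiset.sum_toList] at h2
    exact h2

lemma class_mem_support {V : Type} [Fintype V] {κ : V → ℕ} {d : ℕ →₀ ℕ}
    (hc : ∀ c, (Finset.univ.filter (fun v => κ v = c)).card = d c) (v : V) :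
    κ v ∈ d.support := by
  rw [Finsupp.mem_support_iff, ← hc (κ v)]
  apply Finset.card_ne_zero_of_mem (a := v)
  exact Finset.mem_filter.mpr ⟨Finset.mem_univ v, rfl⟩

lemma puzzles_nonempty_of_coloring (l : List ℕ) (d : ℕ →₀ ℕ)
    (κ : (Σ j : Fin l.length, Fin (l.get j)) → ℕ)
    (hp : ∀ v w, (multipartite l).Adj v w → κ v ≠ κ w)
    (hc : ∀ c, (Finset.univ.filter (fun v => κ v = c)).card = d c) :
    puzzles (expParts d) l ≠ ∅ := by
  classical
  rw [← Finset.nonempty_iff_ne_empty]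
  by_cases hk : l.length = 0
  · have hd : d = 0 := by
      ext c
      rw [← hc c]
      simp only [Finsupp.coe_zero, Pi.zero_apply]
      rw [Finset.card_eq_zero]
      apply Finset.eq_empty_of_forall_notMem
      rintro ⟨j, x⟩ _
      exact absurd j.isLt (by omega)
    refine ⟨fun _ => 0, ?_⟩
    rw [puzzles, Finset.mem_filter]
    refine ⟨?_, ?_, ?_⟩
    · apply Fintype.mem_piFinset.mpr
      intro i; exact absurd i.isLt (by omega)
    · have : (Finset.univ : Finset (Fin l.length)) = ∅ := by
        apply Finset.eq_empty_of_forall_notMem; intro i _; exact absurd i.isLt (by omega)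
      rw [this, hd]
      simp [expParts]
    · intro i; exact absurd i.isLt (by omega)
  · haveI hV : Nonempty (Fin l.length) := ⟨⟨0, Nat.pos_of_ne_zero hk⟩⟩
    set F : ℕ → Fin l.length := fun c =>
      if h : ∃ v : (Σ j : Fin l.length, Fin (l.get j)), κ v = c then (Classical.choose h).1
      else Classical.arbitrary _ with hFdef
    have hF : ∀ c (v : Σ j : Fin l.length, Fin (l.get j)), κ v = c → F c = v.1 := by
      intro c v hv
      have hex : ∃ w, κ w = c := ⟨v, hv⟩
      rw [hFdef]
      simp only [dif_pos hex]
      by_contra hne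
      exact hp _ _ hne (by rw [Classical.choose_spec hex, hv])
    set g : Fin l.length → Multiset ℕ :=
      fun i => ((d.support.filter (fun c => F c = i)).val).map d with hgdef
    refine ⟨g, ?_⟩
    rw [puzzles, Finset.mem_filter]
    refine ⟨?_, ?_, ?_⟩
    · apply Fintype.mem_piFinset.mpr
      intro i
      rw [Multiset.mem_toFinset, Multiset.mem_powerset]
      apply Multiset.map_le_map
      rw [Finset.filter_val]
      exact Multiset.filter_le _ _
    · have hmap : ∑ i, g i = ((∑ i, (d.support.filter (fun c => F c = i)).val)).map d := by
        have hms := map_sum (Multiset.mapAddMonoidHom (⇑d))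
          (fun i => (d.support.filter (fun c => F c = i)).val) Finset.univ
        simp only [Multiset.coe_mapAddMonoidHom] at hms
        rw [hgdef]; exact hms.symm
      rw [hmap]
      have hval : (∑ i, (d.support.filter (fun c => F c = i)).val) = d.support.val := by
        refine Multiset.ext.mpr (fun a => ?_)
        rw [Multiset.count_sum']
        simp only [Finset.filter_val, Multiset.count_filter]
        rw [Finset.sum_ite_eq]
        simp
      rw [hval]; rfl
    · intro i
      have hblock := Finset.card_eq_sum_card_fiberwise (f := κ)
        (s := Finset.univ.filter (fun v : (Σ j : Fin l.length, Fin (l.get j)) => v.1 = i))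
        (t := d.support.filter (fun c => F c = i)) ?_
      · rw [card_block] at hblock
        have hg : (g i).sum = ∑ c ∈ d.support.filter (fun c => F c = i), d c := rfl
        rw [hg, hblock]
        apply Finset.sum_congr rfl
        intro c hct
        rw [Finset.mem_filter] at hct
        rw [← hc c]
        congr 1
        ext v
        simp only [Finset.mem_filter, Finset.mem_univ, true_and]
        constructor
        · intro h2
          exact ⟨(hF c v h2).symm.trans hct.2, h2⟩
        · intro h2
          exact h2.2
      · intro v hv
        rw [Finset.mem_coe, Finset.mem_filter] at hv ⊢
        exact ⟨class_mem_support hc v, (hF (κ v) v rfl).trans hv.2⟩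

def permFiberEquiv {α β : Type} [Fintype α] [DecidableEq β] (f : α → β) :
    {σ : Equiv.Perm α // ∀ x, f (σ x) = f x} ≃ (∀ b : β, Equiv.Perm {x // f x = b}) where
  toFun σ b := Equiv.subtypeEquiv σ.1 (fun x => by
    constructor
    · intro h; rw [σ.2 x, h]
    · intro h; rw [← σ.2 x, h])
  invFun g := ⟨(Equiv.sigmaFiberEquiv f).symm.trans
      ((Equiv.sigmaCongrRight g).trans (Equiv.sigmaFiberEquiv f)),
    fun x => ((g (f x)) ⟨x, rfl⟩).2⟩
  left_inv σ := by
    apply Subtype.ext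
    apply Equiv.ext
    intro x
    rfl
  right_inv g := by
    funext b
    apply Equiv.ext
    rintro ⟨x, rfl⟩
    apply Subtype.ext
    rfl

lemma card_fiber (l : List ℕ) (b : ℕ) :
    Fintype.card {i : Fin l.length // l.get i = b} = Multiset.count b (↑l : Multiset ℕ) := by
  classical
  rw [Fintype.card_subtype]
  rw [← univ_val_map_get l, Multiset.count_map]
  have h2 : (Finset.filter (fun x => l.get x = b) Finset.univ).val
      = Multiset.filter (fun a => b = l.get a) Finset.univ.val := by
    rw [Finset.filter_val]
    apply Multiset.filter_congr
    intro x _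
    exact eq_comm
  rw [← h2]
  rfl

lemma card_permSet (l : List ℕ) :
    Nat.card {σ : Equiv.Perm (Fin l.length) // ∀ i, l.get (σ i) = l.get i}
      = multFact (↑l : Multiset ℕ) := by
  classical
  set t := (↑l : Multiset ℕ).toFinset with ht
  have hmem : ∀ i : Fin l.length, l.get i ∈ t := by
    intro i
    rw [ht, Multiset.mem_toFinset, Multiset.mem_coe]
    exact List.get_mem l i
  set f : Fin l.length → ↥t := fun i => ⟨l.get i, hmem i⟩ with hf
  have e1 : {σ : Equiv.Perm (Fin l.length) // ∀ i, l.get (σ i) = l.get i}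
      ≃ {σ : Equiv.Perm (Fin l.length) // ∀ i, f (σ i) = f i} := by
    apply Equiv.subtypeEquiv (Equiv.refl _)
    intro σ
    constructor
    · intro h i; exact Subtype.ext (h i)
    · intro h i; exact congrArg Subtype.val (h i)
  rw [Nat.card_congr (e1.trans (permFiberEquiv f)), Nat.card_pi]
  have : ∀ b : ↥t, Nat.card (Equiv.Perm {i : Fin l.length // f i = b})
      = (Multiset.count (↑b) (↑l : Multiset ℕ)).factorial := by
    intro b
    rw [Nat.card_eq_fintype_card, Fintype.card_perm]
    congr 1
    rw [← card_fiber l ↑b]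
    apply Fintype.card_congr
    apply Equiv.subtypeEquiv (Equiv.refl _)
    intro i
    rw [hf]
    constructor
    · intro h; exact congrArg Subtype.val h
    · intro h; exact Subtype.ext h
  rw [Finset.prod_congr rfl (fun b _ => this b)]
  rw [multFact]
  exact Finset.prod_coe_sort t (fun j => (Multiset.count j (↑l : Multiset ℕ)).factorial)

lemma toFinsupp_lt (l : List ℕ) (c : ℕ) (h : c < l.length) :
    l.toFinsupp c = l.get ⟨c, h⟩ := by
  rw [List.toFinsupp_apply, List.getD_eq_getElem l 0 h]
  rfl

lemma toFinsupp_ge (l : List ℕ) (c : ℕ) (h : l.length ≤ c) :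
    l.toFinsupp c = 0 := by
  rw [List.toFinsupp_apply, List.getD_eq_default l 0 (by omega)]

lemma card_colorType (l : List ℕ) (hpos : ∀ x ∈ l, 0 < x) :
    Nat.card {κ : (Σ j : Fin l.length, Fin (l.get j)) → ℕ //
      (∀ v w, (multipartite l).Adj v w → κ v ≠ κ w) ∧
      ∀ c, (Finset.univ.filter (fun v => κ v = c)).card = l.toFinsupp c}
    = multFact (↑l : Multiset ℕ) := by
  classical
  rw [← card_permSet l]
  have hget : ∀ j : Fin l.length, 0 < l.get j := fun j => hpos _ (List.get_mem l j)
  have hproper : ∀ (σ : {σ : Equiv.Perm (Fin l.length) // ∀ i, l.get (σ i) = l.get i})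
      (v w : Σ j : Fin l.length, Fin (l.get j)), (multipartite l).Adj v w →
      (σ.1 v.1 : ℕ) ≠ (σ.1 w.1 : ℕ) := by
    intro σ v w hvw hh
    exact hvw (σ.1.injective (Fin.ext hh))
  have hcounts : ∀ (σ : {σ : Equiv.Perm (Fin l.length) // ∀ i, l.get (σ i) = l.get i})
      (c : ℕ), (Finset.univ.filter
        (fun v : (Σ j : Fin l.length, Fin (l.get j)) => ((σ.1 v.1 : ℕ) = c))).card
        = l.toFinsupp c := by
    intro σ c
    by_cases hcl : c < l.length
    · have hfil : Finset.univ.filter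
          (fun v : (Σ j : Fin l.length, Fin (l.get j)) => ((σ.1 v.1 : ℕ) = c))
          = Finset.univ.filter (fun v => v.1 = σ.1.symm ⟨c, hcl⟩) := by
        apply Finset.filter_congr
        intro v _
        constructor
        · intro h
          rw [Equiv.eq_symm_apply]
          exact Fin.ext h
        · intro h
          rw [Equiv.eq_symm_apply] at h
          exact congrArg Fin.val h
      rw [hfil, card_block, toFinsupp_lt l c hcl]
      have h2 := σ.2 (σ.1.symm ⟨c, hcl⟩)
      rw [Equiv.apply_symm_apply] at h2
      exact h2.symm
    · rw [toFinsupp_ge l c (by omega)]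
      rw [Finset.card_eq_zero]
      apply Finset.eq_empty_of_forall_notMem
      intro v hv
      rw [Finset.mem_filter] at hv
      have := (σ.1 v.1).isLt
      omega
  set Φ : {σ : Equiv.Perm (Fin l.length) // ∀ i, l.get (σ i) = l.get i} →
      {κ : (Σ j : Fin l.length, Fin (l.get j)) → ℕ //
        (∀ v w, (multipartite l).Adj v w → κ v ≠ κ w) ∧
        ∀ c, (Finset.univ.filter (fun v => κ v = c)).card = l.toFinsupp c} :=
    fun σ => ⟨fun v => (σ.1 v.1 : ℕ), hproper σ, hcounts σ⟩ with hΦ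
  have hinj : Function.Injective Φ := by
    intro σ τ h
    apply Subtype.ext
    apply Equiv.ext
    intro j
    have := congrArg (fun κ => κ.1 ⟨j, ⟨0, hget j⟩⟩) h
    exact Fin.ext this
  have hsurj : Function.Surjective Φ := by
    rintro ⟨κ, hp, hc⟩
    -- colors of blocks
    have hcol : ∀ j : Fin l.length, κ ⟨j, ⟨0, hget j⟩⟩ < l.length := by
      intro j
      have hmem := class_mem_support hc ⟨j, ⟨0, hget j⟩⟩
      rw [List.toFinsupp_support, Finset.mem_filter, Finset.mem_range] at hmem
      exact hmem.1
    set σ₀ : Fin l.length → Fin l.length := fun j => ⟨κ ⟨j, ⟨0, hget j⟩⟩, hcol j⟩ with hσ₀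
    have hinj0 : Function.Injective σ₀ := by
      intro j j' h
      by_contra hne
      have hadj : (multipartite l).Adj ⟨j, ⟨0, hget j⟩⟩ ⟨j', ⟨0, hget j'⟩⟩ := hne
      exact hp _ _ hadj (congrArg Fin.val h)
    have hclass : ∀ (j : Fin l.length) (v : Σ j : Fin l.length, Fin (l.get j)),
        κ v = κ ⟨j, ⟨0, hget j⟩⟩ → v.1 = j := by
      intro j v hv
      by_contra hne
      exact hp v ⟨j, ⟨0, hget j⟩⟩ hne hv
    have hsub : ∀ j : Fin l.length,
        Finset.univ.filter (fun v => κ v = κ ⟨j, ⟨0, hget j⟩⟩)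
        ⊆ Finset.univ.filter (fun v : (Σ j : Fin l.length, Fin (l.get j)) => v.1 = j) := by
      intro j v hv
      rw [Finset.mem_filter] at hv ⊢
      exact ⟨hv.1, hclass j v hv.2⟩
    have hclasscard : ∀ j : Fin l.length,
        (Finset.univ.filter (fun v => κ v = κ ⟨j, ⟨0, hget j⟩⟩)).card = l.get (σ₀ j) := by
      intro j
      rw [hc (κ ⟨j, ⟨0, hget j⟩⟩), toFinsupp_lt l _ (hcol j)]
    have hle : ∀ j : Fin l.length, l.get (σ₀ j) ≤ l.get j := by
      intro j
      have h3 := Finset.card_le_card (hsub j)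
      rw [hclasscard j, card_block] at h3
      exact h3
    have hbij0 := Finite.injective_iff_bijective.mp hinj0
    set σ : Equiv.Perm (Fin l.length) := Equiv.ofBijective σ₀ hbij0 with hσ
    have hsum : ∑ j, l.get (σ₀ j) = ∑ j, l.get j := Equiv.sum_comp σ l.get
    have heq : ∀ j : Fin l.length, l.get (σ₀ j) = l.get j :=
      fun j => (Finset.sum_eq_sum_iff_of_le (fun i _ => hle i)).mp hsum j (Finset.mem_univ j)
    have hblockeq : ∀ j : Fin l.length, ∀ x : Fin (l.get j),
        κ ⟨j, x⟩ = κ ⟨j, ⟨0, hget j⟩⟩ := by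
      intro j x
      have h1 : Finset.univ.filter (fun v => κ v = κ ⟨j, ⟨0, hget j⟩⟩)
          = Finset.univ.filter (fun v : (Σ j : Fin l.length, Fin (l.get j)) => v.1 = j) := by
        apply Finset.eq_of_subset_of_card_le (hsub j)
        rw [card_block, hclasscard j, heq j]
      have hmem : (⟨j, x⟩ : Σ j : Fin l.length, Fin (l.get j))
          ∈ Finset.univ.filter (fun v : (Σ j : Fin l.length, Fin (l.get j)) => v.1 = j) :=
        Finset.mem_filter.mpr ⟨Finset.mem_univ _, rfl⟩
      rw [← h1] at hmem
      exact (Finset.mem_filter.mp hmem).2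
    refine ⟨⟨σ, fun i => heq i⟩, ?_⟩
    apply Subtype.ext
    funext v
    obtain ⟨j, x⟩ := v
    show (σ₀ j : ℕ) = κ ⟨j, x⟩
    rw [hblockeq j x]
  exact (Nat.card_congr (Equiv.ofBijective Φ ⟨hinj, hsurj⟩).symm)

lemma coeff_rOf (m : Multiset ℕ) (d : ℕ →₀ ℕ) :
    MvPowerSeries.coeff d (rOf m)
      = (Nat.card {κ : (Σ j : Fin m.toList.length, Fin (m.toList.get j)) → ℕ //
          (∀ v w, (multipartite m.toList).Adj v w → κ v ≠ κ w) ∧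
          ∀ c, (Finset.univ.filter (fun v => κ v = c)).card = d c} : ℚ) := rfl

lemma coeff_dmon_self (m : Multiset ℕ) (hpos : ∀ x ∈ m, 0 < x) :
    MvPowerSeries.coeff (dmon m) (rOf m) = (multFact m : ℚ) := by
  rw [coeff_rOf]
  norm_cast
  have h := card_colorType m.toList (fun x hx => hpos x (by rwa [← Multiset.mem_toList]))
  rw [Multiset.coe_toList] at h
  exact h

lemma coeff_rOf_eq_zero (m mu : Multiset ℕ) (hmu : ∀ x ∈ mu, 0 < x)
    (h : puzzles mu m.toList = ∅) :
    MvPowerSeries.coeff (dmon mu) (rOf m) = 0 := by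
  rw [coeff_rOf]
  norm_cast
  by_contra h0
  obtain ⟨κ, hp, hc⟩ := (Nat.card_ne_zero.mp h0).1
  have h2 := puzzles_nonempty_of_coloring m.toList (dmon mu) κ hp hc
  rw [expParts_dmon hmu] at h2
  exact h2 h

lemma multiset_card_le_sum (m : Multiset ℕ) (h : ∀ x ∈ m, 0 < x) :
    Multiset.card m ≤ m.sum := by
  have h1 := Multiset.sum_map_le_sum_map (fun _ => 1) id (fun x hx => h x hx)
  rw [Multiset.map_id] at h1
  rw [Multiset.map_const'] at h1
  rw [Multiset.sum_replicate, smul_eq_mul, mul_one] at h1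
  exact h1

lemma card_finset_sum {ι : Type} (s : Finset ι) (g : ι → Multiset ℕ) :
    Multiset.card (∑ i ∈ s, g i) = ∑ i ∈ s, Multiset.card (g i) := by
  classical
  induction s using Finset.induction with
  | empty => simp
  | insert h ih => simp_all [Finset.sum_insert]

lemma puzzle_card (mu : Multiset ℕ) (l : List ℕ) (hl : ∀ x ∈ l, 0 < x)
    (g : Fin l.length → Multiset ℕ) (hg : g ∈ puzzles mu l) :
    l.length ≤ Multiset.card mu ∧ (l.length = Multiset.card mu → mu = ↑l) := by
  rw [puzzles, Finset.mem_filter] at hg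
  obtain ⟨_, hsum, hparts⟩ := hg
  have hcard : Multiset.card mu = ∑ i, Multiset.card (g i) := by
    rw [← hsum]
    exact card_finset_sum Finset.univ g
  have hone : ∀ i, 1 ≤ Multiset.card (g i) := by
    intro i
    by_contra h0
    have h1 : Multiset.card (g i) = 0 := by omega
    rw [Multiset.card_eq_zero] at h1
    have h2 := hparts i
    rw [h1] at h2
    have h3 := hl _ (List.get_mem l i)
    rw [← h2] at h3
    simp at h3
  have hlen : l.length = ∑ _i : Fin l.length, 1 := by
    rw [Finset.sum_const, Finset.card_univ, Fintype.card_fin, smul_eq_mul, mul_one]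
  constructor
  · calc l.length = ∑ _i : Fin l.length, 1 := hlen
      _ ≤ ∑ i, Multiset.card (g i) := Finset.sum_le_sum (fun i _ => hone i)
      _ = Multiset.card mu := hcard.symm
  · intro heq
    have hptw : ∀ i : Fin l.length, (1 : ℕ) = Multiset.card (g i) := by
      have := (Finset.sum_eq_sum_iff_of_le (f := fun _ : Fin l.length => (1:ℕ))
        (g := fun i => Multiset.card (g i)) (fun i _ => hone i)).mp
        (by calc ∑ _i : Fin l.length, (1:ℕ) = l.length := hlen.symm
              _ = Multiset.card mu := heq
              _ = ∑ i, Multiset.card (g i) := hcard)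
      intro i; exact this i (Finset.mem_univ i)
    have hsingle : ∀ i : Fin l.length, g i = {l.get i} := by
      intro i
      obtain ⟨a, ha⟩ := Multiset.card_eq_one.mp (hptw i).symm
      have h2 := hparts i
      rw [ha] at h2 ⊢
      rw [Multiset.sum_singleton] at h2
      rw [h2]
    have : mu = ∑ i, ({l.get i} : Multiset ℕ) := by
      rw [← hsum]
      exact Finset.sum_congr rfl (fun i _ => hsingle i)
    rw [this]
    have h4 : ∀ i : Fin l.length, ({l.get i} : Multiset ℕ) = Multiset.map l.get {i} := by
      intro i; simp
    rw [Finset.sum_congr rfl (fun i _ => h4 i)]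
    have h5 := map_sum (Multiset.mapAddMonoidHom l.get) (fun i : Fin l.length => ({i} : Multiset (Fin l.length))) Finset.univ
    simp only [Multiset.coe_mapAddMonoidHom] at h5
    rw [← h5, Finset.sum_multiset_singleton, univ_val_map_get]

lemma coeff_mtilde (m : Multiset ℕ) (d : ℕ →₀ ℕ) :
    MvPowerSeries.coeff d (mtilde m)
      = if expParts d = m then (multFact m : ℚ) else 0 := rfl

lemma key_identity (n : ℕ) (f : MvPowerSeries ℕ ℚ) (hf : f ∈ symHomog n) :
    f = ∑ mu : Nat.Partition n,
      (MvPowerSeries.coeff (dmon mu.parts) f / (multFact mu.parts : ℚ)) • mtilde mu.parts := by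
  obtain ⟨hsymm, hhom⟩ := hf
  apply MvPowerSeries.ext
  intro d
  rw [map_sum]
  simp only [map_smul, smul_eq_mul, coeff_mtilde]
  by_cases hd : (d.sum fun _ v => v) = n
  · have hpos : ∀ {x : ℕ}, x ∈ expParts d → 0 < x := fun hx => expParts_pos hx
    set mu0 : Nat.Partition n := ⟨expParts d, hpos, by rw [expParts_sum]; exact hd⟩ with hmu0
    rw [Finset.sum_eq_single mu0]
    · rw [if_pos rfl, div_mul_cancel₀ _ (multFact_ne_zero mu0.parts)]
      have hED : expParts d = expParts (dmon mu0.parts) := by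
        rw [expParts_dmon (fun x hx => mu0.parts_pos hx)]
      obtain ⟨σ, hσ⟩ := exists_mapDomain d (dmon mu0.parts) hED
      rw [← hσ, hsymm σ (dmon mu0.parts)]
    · intro mu _ hne
      rw [if_neg, mul_zero]
      intro hcond
      exact hne (Nat.Partition.ext (x := mu) (y := mu0) hcond.symm)
    · intro h; exact absurd (Finset.mem_univ mu0) h
  · have hzero : MvPowerSeries.coeff d f = 0 := by
      by_contra h0
      exact hd (hhom d h0)
    rw [hzero, Finset.sum_eq_zero]
    intro mu _
    rw [if_neg, mul_zero]
    intro hcond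
    apply hd
    rw [← expParts_sum, hcond, mu.parts_sum]

lemma coeff_card_lt {n : ℕ} (lam mu : Nat.Partition n)
    (h : MvPowerSeries.coeff (dmon mu.parts) (rOf lam.parts) ≠ 0) :
    Multiset.card lam.parts ≤ Multiset.card mu.parts ∧
    (mu ≠ lam → Multiset.card lam.parts < Multiset.card mu.parts) := by
  have hpz : puzzles mu.parts lam.parts.toList ≠ ∅ := by
    intro h0
    exact h (coeff_rOf_eq_zero lam.parts mu.parts (fun x hx => mu.parts_pos hx) h0)
  obtain ⟨g, hg⟩ := Finset.nonempty_iff_ne_empty.mpr hpz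
  have hl : ∀ x ∈ lam.parts.toList, 0 < x := fun x hx =>
    lam.parts_pos (by rwa [← Multiset.mem_toList])
  have hc := puzzle_card mu.parts lam.parts.toList hl g hg
  have hlen : lam.parts.toList.length = Multiset.card lam.parts := Multiset.length_toList _
  constructor
  · rw [← hlen]; exact hc.1
  · intro hne
    rcases lt_or_eq_of_le hc.1 with h1 | h1
    · omega
    · exfalso
      apply hne
      apply Nat.Partition.ext
      rw [hc.2 h1, Multiset.coe_toList]
  
lemma rBasis_mem (n : ℕ) (lam : Nat.Partition n) : rBasis n lam ∈ symHomog n := by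
  have := rOf_mem_symHomog lam.parts
  rwa [lam.parts_sum] at this

lemma diag_one (n : ℕ) (mu : Nat.Partition n) :
    MvPowerSeries.coeff (dmon mu.parts) (rOf mu.parts) / (multFact mu.parts : ℚ) = 1 := by
  rw [coeff_dmon_self mu.parts (fun x hx => mu.parts_pos hx)]
  exact div_self (multFact_ne_zero mu.parts)

lemma mtilde_step (n : ℕ) (mu : Nat.Partition n)
    (H : ∀ mu' : Nat.Partition n, Multiset.card mu.parts < Multiset.card mu'.parts →
      mtilde mu'.parts ∈ Submodule.span ℚ (Set.range (rBasis n))) :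
    mtilde mu.parts ∈ Submodule.span ℚ (Set.range (rBasis n)) := by
  classical
  have hexp := key_identity n (rOf mu.parts) (rBasis_mem n mu)
  rw [← Finset.add_sum_erase _ _ (Finset.mem_univ mu), diag_one n mu, one_smul] at hexp
  have heq : mtilde mu.parts = rOf mu.parts - ∑ x ∈ Finset.univ.erase mu,
      (MvPowerSeries.coeff (dmon x.parts) (rOf mu.parts) / (multFact x.parts : ℚ))
        • mtilde x.parts :=
    eq_sub_of_add_eq hexp.symm
  rw [heq]
  apply Submodule.sub_mem
  · exact Submodule.subset_span ⟨mu, rfl⟩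
  · apply Submodule.sum_mem
    intro mu' hmu'
    rw [Finset.mem_erase] at hmu'
    by_cases hcz : MvPowerSeries.coeff (dmon mu'.parts) (rOf mu.parts)
        / (multFact mu'.parts : ℚ) = 0
    · rw [hcz, zero_smul]; exact Submodule.zero_mem _
    · apply Submodule.smul_mem
      apply H
      have hco : MvPowerSeries.coeff (dmon mu'.parts) (rOf mu.parts) ≠ 0 := by
        intro h0; exact hcz (by rw [h0, zero_div])
      exact (coeff_card_lt mu mu' hco).2 hmu'.1

lemma parts_card_le_n (n : ℕ) (mu : Nat.Partition n) : Multiset.card mu.parts ≤ n := by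
  have := multiset_card_le_sum mu.parts (fun x hx => mu.parts_pos hx)
  rwa [mu.parts_sum] at this

lemma mtilde_mem_span (n : ℕ) (mu : Nat.Partition n) :
    mtilde mu.parts ∈ Submodule.span ℚ (Set.range (rBasis n)) := by
  suffices h : ∀ (t : ℕ) (mu : Nat.Partition n), n - Multiset.card mu.parts ≤ t →
      mtilde mu.parts ∈ Submodule.span ℚ (Set.range (rBasis n)) from h n mu (by omega)
  intro t
  induction t with
  | zero =>
    intro mu h
    apply mtilde_step
    intro mu' hlt
    exfalso
    have h1 := parts_card_le_n n mu'
    omega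
  | succ t ih =>
    intro mu h
    apply mtilde_step
    intro mu' hlt
    apply ih
    have h1 := parts_card_le_n n mu'
    omega

/-- `[m̃_μ] r_λ = 0` unless some puzzle of `μ` into `λ` exists, and `= 1` when `μ = λ`;
consequently `{r_λ : λ ⊢ n}` is a basis of the degree-`n` homogeneous symmetric
functions (it is linearly independent and spans). -/
theorem stmt9 (n : ℕ) :
    (∀ lam mu : Nat.Partition n,
      (puzzles mu.parts lam.parts.toList = ∅ →
        (MvPowerSeries.coeff (dmon mu.parts) (rOf lam.parts)) / (multFact mu.parts : ℚ)
          = 0) ∧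
      (mu = lam →
        (MvPowerSeries.coeff (dmon mu.parts) (rOf lam.parts)) / (multFact mu.parts : ℚ)
          = 1)) ∧
    LinearIndependent ℚ (rBasis n) ∧
    (Submodule.span ℚ (Set.range (rBasis n)) : Set (MvPowerSeries ℕ ℚ)) = symHomog n := by
  classical
  refine ⟨?_, ?_, ?_⟩
  · intro lam mu
    constructor
    · intro h
      rw [coeff_rOf_eq_zero lam.parts mu.parts (fun x hx => mu.parts_pos hx) h, zero_div]
    · intro h
      subst h
      exact diag_one n mu
  · rw [Fintype.linearIndependent_iff]
    intro g hg
    by_contra h0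
    push_neg at h0
    obtain ⟨lam1, hlam1⟩ := h0
    have hne : (Finset.univ.filter (fun lam : Nat.Partition n => g lam ≠ 0)).Nonempty :=
      ⟨lam1, Finset.mem_filter.mpr ⟨Finset.mem_univ _, hlam1⟩⟩
    obtain ⟨lam0, hlam0, hmin⟩ :=
      Finset.exists_min_image _ (fun lam : Nat.Partition n => Multiset.card lam.parts) hne
    rw [Finset.mem_filter] at hlam0
    have happ := congrArg (MvPowerSeries.coeff (dmon lam0.parts)) hg
    rw [map_sum, map_zero] at happ
    simp only [map_smul, smul_eq_mul] at happ
    rw [Finset.sum_eq_single lam0] at happ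
    · have hco : MvPowerSeries.coeff (dmon lam0.parts) (rBasis n lam0)
          = (multFact lam0.parts : ℚ) :=
        coeff_dmon_self lam0.parts (fun x hx => lam0.parts_pos hx)
      rw [hco] at happ
      rcases mul_eq_zero.mp happ with h1 | h1
      · exact hlam0.2 h1
      · exact multFact_ne_zero lam0.parts h1
    · intro lam _ hlamne
      by_cases hgz : g lam = 0
      · rw [hgz, zero_mul]
      · have hcz : MvPowerSeries.coeff (dmon lam0.parts) (rBasis n lam) = 0 := by
          by_contra hcc
          have hne2 : lam0 ≠ lam := fun hh => hlamne hh.symm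
          have hlt := (coeff_card_lt lam lam0 hcc).2 hne2
          have hm := hmin lam (Finset.mem_filter.mpr ⟨Finset.mem_univ _, hgz⟩)
          omega
        rw [hcz, mul_zero]
    · intro h; exact absurd (Finset.mem_univ lam0) h
  · apply Set.Subset.antisymm
    · intro x hx
      have hle : Submodule.span ℚ (Set.range (rBasis n)) ≤ symHomogSub n := by
        rw [Submodule.span_le]
        rintro y ⟨lam, rfl⟩
        exact rBasis_mem n lam
      exact hle hx
    · intro f hf
      have hmem : (∑ mu : Nat.Partition n,
          (MvPowerSeries.coeff (dmon mu.parts) f / (multFact mu.parts : ℚ))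
            • mtilde mu.parts) ∈ Submodule.span ℚ (Set.range (rBasis n)) :=
        Submodule.sum_mem _ (fun mu _ => Submodule.smul_mem _ _ (mtilde_mem_span n mu))
      rw [key_identity n f hf]
      exact hmem
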